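/- Let A be an m×n real matrix and ε > 0. Then there exists a matrix B of rank at most 1/ε² such that ‖A−B‖₂ ≤ ε·‖A‖_F, where ‖·‖₂ is the spectral (operator) norm and ‖·‖_F is the Frobenius norm. -/

import Mathlib

/-- Euclidean norm of a vector. -/
noncomputable def enorm' {n : ℕ} (v : Fin n → ℝ) : ℝ := Real.sqrt (∑ i, v i ^ 2)

/-- Frobenius norm of a matrix. -/
noncomputable def frob {m n : ℕ} (M : Matrix (Fin m) (Fin n) ℝ) : ℝ :=
  Real.sqrt (∑ i, ∑ j, M i j ^ 2)

/-- Spectral (operator) norm of a matrix: the supremum of `‖Mx‖` over unit vectors `x`. -/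
noncomputable def specNorm {m n : ℕ} (M : Matrix (Fin m) (Fin n) ℝ) : ℝ :=
  sSup ((fun x : Fin n → ℝ => enorm' (M.mulVec x)) '' {x | enorm' x = 1})

open Matrix Finset

lemma myrank_add_le {m n : ℕ} (M N : Matrix (Fin m) (Fin n) ℝ) :
    (M + N).rank ≤ M.rank + N.rank := by
  rw [Matrix.rank, Matrix.rank, Matrix.rank]
  have hle : LinearMap.range (M + N).mulVecLin ≤
      LinearMap.range M.mulVecLin ⊔ LinearMap.range N.mulVecLin := by
    rintro y ⟨x, rfl⟩
    rw [Matrix.mulVecLin_add]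
    exact Submodule.add_mem_sup ⟨x, rfl⟩ ⟨x, rfl⟩
  exact (Submodule.finrank_mono hle).trans
    (Submodule.finrank_add_le_finrank_add_finrank _ _)

lemma myrank_sum_le {m n : ℕ} {ι : Type*} (s : Finset ι) (f : ι → Matrix (Fin m) (Fin n) ℝ) :
    (∑ i ∈ s, f i).rank ≤ ∑ i ∈ s, (f i).rank := by
  classical
  induction s using Finset.induction with
  | empty => simp [Matrix.rank_zero]
  | insert _ _ h ih =>
    rw [Finset.sum_insert h, Finset.sum_insert h]
    exact (myrank_add_le _ _).trans (by gcongr)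

lemma myvecMulVec_mulVec {m n : ℕ} (u : Fin m → ℝ) (w x : Fin n → ℝ) :
    (Matrix.vecMulVec u w) *ᵥ x = (w ⬝ᵥ x) • u := by
  funext j
  simp [Matrix.vecMulVec, Matrix.mulVec, dotProduct, Finset.mul_sum, mul_assoc]
  rw [Finset.sum_mul]
  exact Finset.sum_congr rfl fun i _ => by ring

lemma myrank_vecMulVec_le {m n : ℕ} (u : Fin m → ℝ) (w : Fin n → ℝ) :
    (Matrix.vecMulVec u w).rank ≤ 1 := by
  rw [Matrix.rank]
  have hle : LinearMap.range (Matrix.vecMulVec u w).mulVecLin ≤ Submodule.span ℝ {u} := by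
    rintro y ⟨x, rfl⟩
    rw [Matrix.mulVecLin_apply, myvecMulVec_mulVec]
    exact Submodule.smul_mem _ _ (Submodule.mem_span_singleton_self u)
  refine (Submodule.finrank_mono hle).trans ?_
  by_cases hu : u = 0
  · subst hu
    rw [Submodule.span_zero_singleton]
    simp
  · exact le_of_eq (finrank_span_singleton hu)

lemma mysum_dotProduct {n : ℕ} {ι : Type*} (s : Finset ι) (f : ι → (Fin n → ℝ)) (w : Fin n → ℝ) :
    (∑ i ∈ s, f i) ⬝ᵥ w = ∑ i ∈ s, f i ⬝ᵥ w := by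
  simp only [dotProduct, Finset.sum_apply, Finset.sum_mul]
  rw [Finset.sum_comm]

lemma mydotProduct_sum {n : ℕ} {ι : Type*} (s : Finset ι) (w : Fin n → ℝ) (f : ι → (Fin n → ℝ)) :
    w ⬝ᵥ (∑ i ∈ s, f i) = ∑ i ∈ s, w ⬝ᵥ f i := by
  simp only [dotProduct, Finset.sum_apply, Finset.mul_sum]
  rw [Finset.sum_comm]

lemma mysum_mulVec {m n : ℕ} {ι : Type*} (s : Finset ι) (f : ι → Matrix (Fin m) (Fin n) ℝ)
    (x : Fin n → ℝ) : (∑ i ∈ s, f i) *ᵥ x = ∑ i ∈ s, (f i) *ᵥ x := by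
  classical
  induction s using Finset.induction with
  | empty => simp [Matrix.mulVec]
  | insert _ _ h ih => rw [Finset.sum_insert h, Finset.sum_insert h, Matrix.add_mulVec, ih]

lemma mymulVec_sum {m n : ℕ} {ι : Type*} (s : Finset ι) (M : Matrix (Fin m) (Fin n) ℝ)
    (f : ι → (Fin n → ℝ)) : M *ᵥ (∑ i ∈ s, f i) = ∑ i ∈ s, M *ᵥ f i := by
  classical
  induction s using Finset.induction with
  | empty => simp [Matrix.mulVec_zero]
  | insert _ _ h ih => rw [Finset.sum_insert h, Finset.sum_insert h, Matrix.mulVec_add, ih]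

/-- **Low-rank approximation in spectral norm.** For any matrix `A` and `ε > 0` there is a
matrix `B` of rank at most `1/ε²` with `‖A - B‖₂ ≤ ε ‖A‖_F`. -/
theorem low_rank_spectral_approx (m n : ℕ) (A : Matrix (Fin m) (Fin n) ℝ)
    (ε : ℝ) (hε : 0 < ε) :
    ∃ B : Matrix (Fin m) (Fin n) ℝ,
      (B.rank : ℝ) ≤ 1 / ε ^ 2 ∧ specNorm (A - B) ≤ ε * frob A := by
  classical
  set H : Matrix (Fin n) (Fin n) ℝ := Aᵀ * A with hHdef
  have hH : H.IsHermitian := Matrix.isHermitian_conjTranspose_mul_self A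
  set v : Fin n → (Fin n → ℝ) := fun i => ⇑(hH.eigenvectorBasis i) with hvdef
  set μ : Fin n → ℝ := hH.eigenvalues with hμdef
  have heig : ∀ i, H *ᵥ v i = μ i • v i := fun i => hH.mulVec_eigenvectorBasis i
  have horth : ∀ i j, v i ⬝ᵥ v j = if i = j then 1 else 0 := by
    intro i j
    have h := orthonormal_iff_ite.mp hH.eigenvectorBasis.orthonormal i j
    simpa [PiLp.inner_apply, RCLike.inner_apply, conj_trivial, dotProduct, mul_comm] using h
  -- key: Gram identities
  have hkey : ∀ i j, (A *ᵥ v i) ⬝ᵥ (A *ᵥ v j) = if i = j then μ i else 0 := by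
    intro i j
    have h1 : (A *ᵥ v i) ⬝ᵥ (A *ᵥ v j) = v i ⬝ᵥ (H *ᵥ v j) := by
      rw [hHdef, ← Matrix.mulVec_mulVec, Matrix.dotProduct_mulVec (v i) Aᵀ,
        Matrix.vecMul_transpose]
    rw [h1, heig j, dotProduct_smul, smul_eq_mul, horth i j]
    by_cases h : i = j <;> simp [h]
  have hμ0 : ∀ i, 0 ≤ μ i := by
    intro i
    have h := hkey i i
    rw [if_pos rfl] at h
    rw [← h]
    exact Finset.sum_nonneg fun k _ => mul_self_nonneg _
  -- expansion in the eigenbasis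
  have hcol : ∀ j k, ∑ i, v i j * v i k = if j = k then 1 else 0 := by
    have hVVt : (Matrix.of fun i j => v i j) * (Matrix.of fun i j => v i j)ᵀ = 1 := by
      ext i j
      simpa [Matrix.mul_apply, Matrix.one_apply, dotProduct] using horth i j
    have hVtV := mul_eq_one_comm.mp hVVt
    intro j k
    have := congrFun (congrFun hVtV j) k
    simpa [Matrix.mul_apply, Matrix.one_apply] using this
  have hexpand : ∀ x : Fin n → ℝ, ∑ i, (v i ⬝ᵥ x) • v i = x := by
    intro x; funext j
    rw [Finset.sum_apply]
    have h1 : ∀ i, ((v i ⬝ᵥ x) • v i) j = ∑ k, x k * (v i j * v i k) := by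
      intro i
      simp only [Pi.smul_apply, smul_eq_mul, dotProduct, Finset.sum_mul]
      exact Finset.sum_congr rfl fun k _ => by ring
    rw [Finset.sum_congr rfl fun i _ => h1 i, Finset.sum_comm]
    have h2 : ∀ k, ∑ i, x k * (v i j * v i k) = x k * (if j = k then 1 else 0) := by
      intro k
      rw [← Finset.mul_sum, hcol j k]
    rw [Finset.sum_congr rfl fun k _ => h2 k]
    simp
  -- trace identity
  set ν : ℝ := ∑ i, ∑ j, A i j ^ 2 with hνdef
  have hν0 : 0 ≤ ν := Finset.sum_nonneg fun i _ => Finset.sum_nonneg fun j _ => sq_nonneg _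
  have htrace : ∑ i, μ i = ν := by
    have h1 : H.trace = ∑ i, μ i := by
      conv_lhs => rw [hH.spectral_theorem]
      rw [Unitary.conjStarAlgAut_apply, Matrix.trace_mul_cycle,
        Matrix.mem_unitaryGroup_iff'.mp (Matrix.IsHermitian.eigenvectorUnitary hH).2,
        Matrix.one_mul, Matrix.trace_diagonal]
      simp [hμdef]
    have h2 : H.trace = ν := by
      rw [Matrix.trace]
      simp only [Matrix.diag_apply, hHdef, Matrix.mul_apply, Matrix.transpose_apply, hνdef]
      rw [Finset.sum_comm]
      exact Finset.sum_congr rfl fun i _ => Finset.sum_congr rfl fun j _ => (sq (A i j)).symm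
    rw [← h1, h2]
  set t : ℝ := ε ^ 2 * ν with htdef
  have ht0 : 0 ≤ t := mul_nonneg (sq_nonneg ε) hν0
  set S : Finset (Fin n) := Finset.univ.filter (fun i => t < μ i) with hSdef
  set B : Matrix (Fin m) (Fin n) ℝ := ∑ i ∈ S, Matrix.vecMulVec (A *ᵥ v i) (v i) with hBdef
  have hfrob : frob A = Real.sqrt ν := by rw [frob]
  refine ⟨B, ?_, ?_⟩
  · -- rank bound
    have hr1 : B.rank ≤ S.card := by
      refine (myrank_sum_le S _).trans ?_
      calc ∑ i ∈ S, (Matrix.vecMulVec (A *ᵥ v i) (v i)).rank ≤ ∑ i ∈ S, 1 :=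
            Finset.sum_le_sum fun i _ => myrank_vecMulVec_le _ _
        _ = S.card := by simp
    have hScard : (S.card : ℝ) ≤ 1 / ε ^ 2 := by
      have hsum : (S.card : ℝ) * t ≤ ν := by
        calc (S.card : ℝ) * t = ∑ _i ∈ S, t := by rw [Finset.sum_const, nsmul_eq_mul]
          _ ≤ ∑ i ∈ S, μ i := Finset.sum_le_sum fun i hi => (Finset.mem_filter.mp hi).2.le
          _ ≤ ∑ i, μ i := Finset.sum_le_sum_of_subset_of_nonneg (Finset.subset_univ S)
              (fun i _ _ => hμ0 i)
          _ = ν := htrace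
      by_cases hν : ν = 0
      · have hSempty : S = ∅ := by
          refine Finset.eq_empty_of_forall_notMem fun i hi => ?_
          have hiμ := (Finset.mem_filter.mp hi).2
          have hμi : μ i = 0 := by
            have hz : ∑ i, μ i = 0 := by rw [htrace, hν]
            exact (Finset.sum_eq_zero_iff_of_nonneg fun i _ => hμ0 i).mp hz i (Finset.mem_univ i)
          rw [hμi, htdef, hν, mul_zero] at hiμ
          exact lt_irrefl 0 hiμ
        rw [hSempty]
        simp only [Finset.card_empty, Nat.cast_zero]
        positivity
      · have hνpos : 0 < ν := lt_of_le_of_ne hν0 (Ne.symm hν)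
        rw [le_div_iff₀ (pow_pos hε 2)]
        nlinarith [hsum]
    calc (B.rank : ℝ) ≤ (S.card : ℝ) := Nat.cast_le.mpr hr1
      _ ≤ 1 / ε ^ 2 := hScard
  · -- spectral bound
    have hbound : ∀ x : Fin n → ℝ, enorm' x = 1 → enorm' ((A - B) *ᵥ x) ≤ ε * frob A := by
      intro x hx
      have hx1 : x ⬝ᵥ x = 1 := by
        have h := Real.sqrt_eq_one.mp hx
        calc x ⬝ᵥ x = ∑ i, x i ^ 2 := Finset.sum_congr rfl fun i _ => (sq (x i)).symm
          _ = 1 := h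
      have hc2 : ∑ i, (v i ⬝ᵥ x) ^ 2 = 1 := by
        have h2 : (∑ i, (v i ⬝ᵥ x) • v i) ⬝ᵥ x = x ⬝ᵥ x := by rw [hexpand x]
        rw [mysum_dotProduct, hx1] at h2
        calc ∑ i, (v i ⬝ᵥ x) ^ 2 = ∑ i, ((v i ⬝ᵥ x) • v i) ⬝ᵥ x := by
              refine Finset.sum_congr rfl fun i _ => ?_
              rw [smul_dotProduct, smul_eq_mul, sq]
          _ = 1 := h2
      have hAx : A *ᵥ x = ∑ i, (v i ⬝ᵥ x) • (A *ᵥ v i) := by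
        conv_lhs => rw [← hexpand x]
        rw [mymulVec_sum]
        exact Finset.sum_congr rfl fun i _ => Matrix.mulVec_smul A _ _
      have hBx : B *ᵥ x = ∑ i ∈ S, (v i ⬝ᵥ x) • (A *ᵥ v i) := by
        rw [hBdef, mysum_mulVec]
        exact Finset.sum_congr rfl fun i _ => myvecMulVec_mulVec _ _ _
      have hsub : (A - B) *ᵥ x = ∑ i ∈ Sᶜ, (v i ⬝ᵥ x) • (A *ᵥ v i) := by
        rw [Matrix.sub_mulVec, hAx, hBx,
          ← Finset.sum_compl_add_sum S (fun i => (v i ⬝ᵥ x) • (A *ᵥ v i))]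
        abel
      have hdot : (∑ i ∈ Sᶜ, (v i ⬝ᵥ x) • (A *ᵥ v i)) ⬝ᵥ (∑ i ∈ Sᶜ, (v i ⬝ᵥ x) • (A *ᵥ v i))
          = ∑ i ∈ Sᶜ, μ i * (v i ⬝ᵥ x) ^ 2 := by
        rw [mysum_dotProduct]
        refine Finset.sum_congr rfl fun i hi => ?_
        rw [smul_dotProduct, mydotProduct_sum, smul_eq_mul, Finset.mul_sum]
        rw [Finset.sum_eq_single i
          (fun j _ hj => by rw [dotProduct_smul, smul_eq_mul, hkey i j,
            if_neg (Ne.symm hj), mul_zero, mul_zero])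
          (fun h => absurd hi h)]
        rw [dotProduct_smul, smul_eq_mul, hkey i i, if_pos rfl]
        ring
      have hle : ∑ i ∈ Sᶜ, μ i * (v i ⬝ᵥ x) ^ 2 ≤ t := by
        calc ∑ i ∈ Sᶜ, μ i * (v i ⬝ᵥ x) ^ 2 ≤ ∑ i ∈ Sᶜ, t * (v i ⬝ᵥ x) ^ 2 := by
              refine Finset.sum_le_sum fun i hi => mul_le_mul_of_nonneg_right ?_ (sq_nonneg _)
              have hmem := Finset.mem_compl.mp hi
              simp only [hSdef, Finset.mem_filter, Finset.mem_univ, true_and, not_lt] at hmem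
              exact hmem
          _ = t * ∑ i ∈ Sᶜ, (v i ⬝ᵥ x) ^ 2 := by rw [Finset.mul_sum]
          _ ≤ t * ∑ i, (v i ⬝ᵥ x) ^ 2 := by
              refine mul_le_mul_of_nonneg_left ?_ ht0
              exact Finset.sum_le_sum_of_subset_of_nonneg (Finset.subset_univ _)
                fun i _ _ => sq_nonneg _
          _ = t := by rw [hc2, mul_one]
      have hnorm : ∑ j, ((A - B) *ᵥ x) j ^ 2 ≤ t := by
        have heq : ∑ j, ((A - B) *ᵥ x) j ^ 2 = ((A - B) *ᵥ x) ⬝ᵥ ((A - B) *ᵥ x) :=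
          Finset.sum_congr rfl fun j _ => sq (((A - B) *ᵥ x) j)
        rw [heq, hsub, hdot]
        exact hle
      calc enorm' ((A - B) *ᵥ x) = Real.sqrt (∑ j, ((A - B) *ᵥ x) j ^ 2) := rfl
        _ ≤ Real.sqrt t := Real.sqrt_le_sqrt hnorm
        _ = ε * Real.sqrt ν := by
            rw [htdef, Real.sqrt_mul (sq_nonneg ε), Real.sqrt_sq hε.le]
        _ = ε * frob A := by rw [hfrob]
    rw [specNorm]
    refine Real.sSup_le ?_ (mul_nonneg hε.le (by rw [hfrob]; exact Real.sqrt_nonneg _))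
    rintro r ⟨x, hx, rfl⟩
    exact hbound x hx
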